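/- For all integers 1 ≤ k ≤ n, the identity Σ_{i=n−k+1}^{n} C(n,i)·C(i−1, n−k)·(−1)^{i−n+k−1}·(1/i) = Σ_{i=n−k+1}^{n} 1/i holds in ℝ (equivalently in ℚ). -/

import Mathlib

open Finset

private lemma alt_sum_real (e : ℕ) (he : e ≠ 0) :
    ∑ j ∈ range (e + 1), (-1 : ℝ) ^ j * (e.choose j : ℝ) = 0 := by
  have h := Int.alternating_sum_range_choose_of_ne he
  have := congrArg (fun z : ℤ => (z : ℝ)) h
  push_cast at this
  simpa using this

private lemma lemT (m : ℕ) : ∀ e : ℕ, 1 ≤ e →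
    ∑ j ∈ range e, ((m + e).choose (m + 1 + j) : ℝ) * ((m + j).choose m : ℝ) * (-1 : ℝ) ^ j
      = 1 := by
  intro e
  induction e with
  | zero => omega
  | succ e ih =>
    intro _
    rcases Nat.eq_zero_or_pos e with rfl | he
    · simp
    have pascal : ∀ j : ℕ, ((m + (e + 1)).choose (m + 1 + j) : ℝ)
        = ((m + e).choose (m + j) : ℝ) + ((m + e).choose (m + 1 + j) : ℝ) := by
      intro j
      have : (m + (e + 1)).choose (m + 1 + j) = (m + e).choose (m + j) + (m + e).choose (m + j + 1) := by
        have h1 : m + (e + 1) = (m + e) + 1 := by ring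
        have h2 : m + 1 + j = (m + j) + 1 := by ring
        rw [h1, h2, Nat.choose_succ_succ']
      rw [this]
      push_cast
      rw [show m + j + 1 = m + 1 + j from by omega]
    have split : ∑ j ∈ range (e + 1),
          ((m + (e + 1)).choose (m + 1 + j) : ℝ) * ((m + j).choose m : ℝ) * (-1 : ℝ) ^ j
        = (∑ j ∈ range (e + 1), ((m + e).choose (m + j) : ℝ) * ((m + j).choose m : ℝ) * (-1 : ℝ) ^ j)
        + ∑ j ∈ range (e + 1), ((m + e).choose (m + 1 + j) : ℝ) * ((m + j).choose m : ℝ) * (-1 : ℝ) ^ j := by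
      rw [← Finset.sum_add_distrib]
      refine Finset.sum_congr rfl fun j _ => ?_
      rw [pascal j]; ring
    rw [split]
    have sumA : ∑ j ∈ range (e + 1),
        ((m + e).choose (m + j) : ℝ) * ((m + j).choose m : ℝ) * (-1 : ℝ) ^ j = 0 := by
      have key : ∀ j : ℕ, j ≤ e →
          ((m + e).choose (m + j) : ℝ) * ((m + j).choose m : ℝ)
            = ((m + e).choose m : ℝ) * (e.choose j : ℝ) := by
        intro j hj
        have h := Nat.choose_mul (n := m + e) (k := m + j) (s := m)
          (by omega)
        have h2 : (m + e) - m = e := by omega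
        have h3 : (m + j) - m = j := by omega
        rw [h2, h3] at h
        exact_mod_cast congrArg (fun z : ℕ => (z : ℝ)) h
      calc ∑ j ∈ range (e + 1),
            ((m + e).choose (m + j) : ℝ) * ((m + j).choose m : ℝ) * (-1 : ℝ) ^ j
          = ∑ j ∈ range (e + 1), ((m + e).choose m : ℝ) * ((-1 : ℝ) ^ j * (e.choose j : ℝ)) := by
            refine Finset.sum_congr rfl fun j hj => ?_
            rw [key j (by simpa using Nat.lt_succ_iff.mp (Finset.mem_range.mp hj))]
            ring
        _ = ((m + e).choose m : ℝ) * ∑ j ∈ range (e + 1), (-1 : ℝ) ^ j * (e.choose j : ℝ) := by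
            rw [Finset.mul_sum]
        _ = 0 := by rw [alt_sum_real e (by omega), mul_zero]
    have sumB : ∑ j ∈ range (e + 1),
        ((m + e).choose (m + 1 + j) : ℝ) * ((m + j).choose m : ℝ) * (-1 : ℝ) ^ j = 1 := by
      rw [Finset.sum_range_succ]
      have hz : (m + e).choose (m + 1 + e) = 0 := Nat.choose_eq_zero_of_lt (by omega)
      rw [hz]
      simpa using ih he
    rw [sumA, sumB, zero_add]

private lemma lemS (m : ℕ) : ∀ d : ℕ, 1 ≤ d →
    ∑ j ∈ range d, ((m + d).choose (m + 1 + j) : ℝ) * ((m + j).choose m : ℝ) * (-1 : ℝ) ^ j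
        * (1 / ((m + 1 + j : ℕ) : ℝ))
      = ∑ j ∈ range d, 1 / ((m + 1 + j : ℕ) : ℝ) := by
  intro d
  induction d with
  | zero => omega
  | succ d ih =>
    intro _
    rcases Nat.eq_zero_or_pos d with rfl | hd
    · simp
    have pascal : ∀ j : ℕ, ((m + (d + 1)).choose (m + 1 + j) : ℝ)
        = ((m + d).choose (m + j) : ℝ) + ((m + d).choose (m + 1 + j) : ℝ) := by
      intro j
      have : (m + (d + 1)).choose (m + 1 + j) = (m + d).choose (m + j) + (m + d).choose (m + j + 1) := by
        have h1 : m + (d + 1) = (m + d) + 1 := by ring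
        have h2 : m + 1 + j = (m + j) + 1 := by ring
        rw [h1, h2, Nat.choose_succ_succ']
      rw [this]
      push_cast
      rw [show m + j + 1 = m + 1 + j from by omega]
    have split : ∑ j ∈ range (d + 1),
          ((m + (d + 1)).choose (m + 1 + j) : ℝ) * ((m + j).choose m : ℝ) * (-1 : ℝ) ^ j
            * (1 / ((m + 1 + j : ℕ) : ℝ))
        = (∑ j ∈ range (d + 1), ((m + d).choose (m + j) : ℝ) * ((m + j).choose m : ℝ)
            * (-1 : ℝ) ^ j * (1 / ((m + 1 + j : ℕ) : ℝ)))
        + ∑ j ∈ range (d + 1), ((m + d).choose (m + 1 + j) : ℝ) * ((m + j).choose m : ℝ)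
            * (-1 : ℝ) ^ j * (1 / ((m + 1 + j : ℕ) : ℝ)) := by
      rw [← Finset.sum_add_distrib]
      refine Finset.sum_congr rfl fun j _ => ?_
      rw [pascal j]; ring
    rw [split]
    have sumB : ∑ j ∈ range (d + 1), ((m + d).choose (m + 1 + j) : ℝ) * ((m + j).choose m : ℝ)
            * (-1 : ℝ) ^ j * (1 / ((m + 1 + j : ℕ) : ℝ))
        = ∑ j ∈ range d, 1 / ((m + 1 + j : ℕ) : ℝ) := by
      rw [Finset.sum_range_succ]
      have hz : (m + d).choose (m + 1 + d) = 0 := Nat.choose_eq_zero_of_lt (by omega)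
      rw [hz]
      simpa using ih hd
    have sumA : ∑ j ∈ range (d + 1), ((m + d).choose (m + j) : ℝ) * ((m + j).choose m : ℝ)
            * (-1 : ℝ) ^ j * (1 / ((m + 1 + j : ℕ) : ℝ))
        = 1 / ((m + 1 + d : ℕ) : ℝ) := by
      have key : ∀ j : ℕ, ((m + d).choose (m + j) : ℝ) * (1 / ((m + 1 + j : ℕ) : ℝ))
          = ((m + (d + 1)).choose (m + 1 + j) : ℝ) * (1 / ((m + d + 1 : ℕ) : ℝ)) := by
        intro j
        have h := Nat.add_one_mul_choose_eq (m + d) (m + j)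
        -- (m+d+1) * (m+d).choose (m+j) = (m+d+1).choose (m+j+1) * (m+j+1)
        have hR : ((m + d + 1 : ℕ) : ℝ) * ((m + d).choose (m + j) : ℝ)
            = ((m + d + 1).choose (m + j + 1) : ℝ) * ((m + j + 1 : ℕ) : ℝ) := by
          exact_mod_cast congrArg (fun z : ℕ => (z : ℝ)) h
        have hmj : ((m + 1 + j : ℕ) : ℝ) ≠ 0 := by positivity
        have hmd : ((m + d + 1 : ℕ) : ℝ) ≠ 0 := by positivity
        have e1 : m + (d + 1) = m + d + 1 := by ring
        have e2 : m + 1 + j = m + j + 1 := by ring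
        rw [e1, e2]
        field_simp
        push_cast at hR ⊢
        linarith [hR]
      calc ∑ j ∈ range (d + 1), ((m + d).choose (m + j) : ℝ) * ((m + j).choose m : ℝ)
            * (-1 : ℝ) ^ j * (1 / ((m + 1 + j : ℕ) : ℝ))
          = ∑ j ∈ range (d + 1), (((m + (d + 1)).choose (m + 1 + j) : ℝ) * ((m + j).choose m : ℝ)
            * (-1 : ℝ) ^ j) * (1 / ((m + d + 1 : ℕ) : ℝ)) := by
            refine Finset.sum_congr rfl fun j _ => ?_
            have := key j
            calc ((m + d).choose (m + j) : ℝ) * ((m + j).choose m : ℝ)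
                  * (-1 : ℝ) ^ j * (1 / ((m + 1 + j : ℕ) : ℝ))
                = (((m + d).choose (m + j) : ℝ) * (1 / ((m + 1 + j : ℕ) : ℝ)))
                  * (((m + j).choose m : ℝ) * (-1 : ℝ) ^ j) := by ring
              _ = (((m + (d + 1)).choose (m + 1 + j) : ℝ) * (1 / ((m + d + 1 : ℕ) : ℝ)))
                  * (((m + j).choose m : ℝ) * (-1 : ℝ) ^ j) := by rw [this]
              _ = (((m + (d + 1)).choose (m + 1 + j) : ℝ) * ((m + j).choose m : ℝ)
                  * (-1 : ℝ) ^ j) * (1 / ((m + d + 1 : ℕ) : ℝ)) := by ring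
        _ = (∑ j ∈ range (d + 1), ((m + (d + 1)).choose (m + 1 + j) : ℝ) * ((m + j).choose m : ℝ)
            * (-1 : ℝ) ^ j) * (1 / ((m + d + 1 : ℕ) : ℝ)) := by
            rw [← Finset.sum_mul]
        _ = 1 / ((m + 1 + d : ℕ) : ℝ) := by
            rw [lemT m (d + 1) (by omega), one_mul,
              show m + d + 1 = m + 1 + d from by omega]
    rw [sumA, sumB, Finset.sum_range_succ]
    ring

/-- The combinatorial identity reducing the general formula for the expected `k`-th
order statistic of a Lévy-frailty Marshall–Olkin vector to a harmonic sum in the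
i.i.d. exponential case. -/
theorem stmt7 (n k : ℕ) (hk1 : 1 ≤ k) (hkn : k ≤ n) :
    ∑ i ∈ Finset.Icc (n - k + 1) n,
        (n.choose i : ℝ) * ((i - 1).choose (n - k) : ℝ) * (-1 : ℝ) ^ (i + k - (n + 1)) *
          (1 / (i : ℝ)) =
      ∑ i ∈ Finset.Icc (n - k + 1) n, 1 / (i : ℝ) := by
  set m := n - k with hm
  have hn : n = m + k := by omega
  have hcard : n + 1 - (m + 1) = k := by omega
  rw [← Finset.Ico_add_one_right_eq_Icc, Finset.sum_Ico_eq_sum_range, hcard]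
  have L : ∀ j ∈ range k,
      (n.choose (m + 1 + j) : ℝ) * ((m + 1 + j - 1).choose (n - k) : ℝ)
          * (-1 : ℝ) ^ (m + 1 + j + k - (n + 1)) * (1 / ((m + 1 + j : ℕ) : ℝ))
        = ((m + k).choose (m + 1 + j) : ℝ) * ((m + j).choose m : ℝ) * (-1 : ℝ) ^ j
          * (1 / ((m + 1 + j : ℕ) : ℝ)) := by
    intro j hj
    have e1 : m + 1 + j - 1 = m + j := by omega
    have e2 : m + 1 + j + k - (n + 1) = j := by omega
    rw [e1, e2, ← hm, ← hn]
  rw [Finset.sum_congr rfl L, lemS m k hk1]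
  have hcard2 : n.succ - (m + 1) = k := by omega
  rw [Finset.sum_Ico_eq_sum_range, hcard]
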